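/- Unipotent parameterization of the crown domain (Ξ = G·exp(iΛ)·x₀): the set of pairs (g·(i + ix), g·(−i + ix)) ∈ ℂ×ℂ, where g ranges over SL(2,ℝ) acting by Möbius transformations and x ranges over the open interval (−1, 1), is exactly the crown domain Ξ = {(z,w) ∈ ℂ×ℂ : Im z > 0 and Im w < 0}. -/

import Mathlib

/-- The Möbius action of `SL(2,ℝ)` on (nonreal) complex numbers. -/
noncomputable def moebSL2R (g : Matrix.SpecialLinearGroup (Fin 2) ℝ) (z : ℂ) : ℂ :=
  (((g : Matrix (Fin 2) (Fin 2) ℝ) 0 0 : ℂ) * z + ((g : Matrix (Fin 2) (Fin 2) ℝ) 0 1 : ℂ)) /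
    (((g : Matrix (Fin 2) (Fin 2) ℝ) 1 0 : ℂ) * z + ((g : Matrix (Fin 2) (Fin 2) ℝ) 1 1 : ℂ))

open Complex Matrix

lemma real_denom_ne_zero {c d : ℝ} {z : ℂ} (hz : z.im ≠ 0) (hcd : ¬(c = 0 ∧ d = 0)) :
    (c : ℂ) * z + d ≠ 0 := by
  intro h
  have h1 : c * z.im = 0 := by
    have := congrArg Complex.im h; simpa using this
  have hc : c = 0 := by
    rcases mul_eq_zero.mp h1 with h' | h'
    · exact h'
    · exact absurd h' hz
  have h2 : c * z.re + d = 0 := by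
    have := congrArg Complex.re h; simpa using this
  exact hcd ⟨hc, by simpa [hc] using h2⟩

lemma sl2_det (g : Matrix.SpecialLinearGroup (Fin 2) ℝ) :
    (g : Matrix (Fin 2) (Fin 2) ℝ) 0 0 * (g : Matrix (Fin 2) (Fin 2) ℝ) 1 1 -
      (g : Matrix (Fin 2) (Fin 2) ℝ) 0 1 * (g : Matrix (Fin 2) (Fin 2) ℝ) 1 0 = 1 := by
  have := g.prop
  rwa [Matrix.det_fin_two] at this

lemma sl2_denom_ne_zero (g : Matrix.SpecialLinearGroup (Fin 2) ℝ) {z : ℂ} (hz : z.im ≠ 0) :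
    ((g : Matrix (Fin 2) (Fin 2) ℝ) 1 0 : ℂ) * z + ((g : Matrix (Fin 2) (Fin 2) ℝ) 1 1 : ℂ) ≠ 0 := by
  apply real_denom_ne_zero hz
  rintro ⟨h1, h2⟩
  have := sl2_det g
  rw [h1, h2] at this
  simp at this

lemma moeb_im (g : Matrix.SpecialLinearGroup (Fin 2) ℝ) (z : ℂ) :
    (moebSL2R g z).im = z.im / Complex.normSq
      (((g : Matrix (Fin 2) (Fin 2) ℝ) 1 0 : ℂ) * z + ((g : Matrix (Fin 2) (Fin 2) ℝ) 1 1 : ℂ)) := by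
  have hdet := sl2_det g
  unfold moebSL2R
  rw [Complex.div_im]
  simp only [Complex.add_im, Complex.add_re, Complex.mul_im, Complex.mul_re,
    Complex.ofReal_re, Complex.ofReal_im]
  rw [div_sub_div_same]
  congr 1
  linear_combination z.im * hdet

lemma moeb_im_pos (g : Matrix.SpecialLinearGroup (Fin 2) ℝ) {z : ℂ} (hz : 0 < z.im) :
    0 < (moebSL2R g z).im := by
  rw [moeb_im]
  have h := sl2_denom_ne_zero g (z := z) hz.ne'
  exact div_pos hz (Complex.normSq_pos.mpr h)

lemma moeb_im_neg (g : Matrix.SpecialLinearGroup (Fin 2) ℝ) {z : ℂ} (hz : z.im < 0) :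
    (moebSL2R g z).im < 0 := by
  rw [moeb_im]
  have h := sl2_denom_ne_zero g (z := z) hz.ne
  exact div_neg_of_neg_of_pos hz (Complex.normSq_pos.mpr h)

lemma moeb_mul (g h : Matrix.SpecialLinearGroup (Fin 2) ℝ) {z : ℂ} (hz : z.im ≠ 0) :
    moebSL2R (g * h) z = moebSL2R g (moebSL2R h z) := by
  have hD := sl2_denom_ne_zero h hz
  unfold moebSL2R
  simp only [Matrix.SpecialLinearGroup.coe_mul, Matrix.mul_apply, Fin.sum_univ_two]
  push_cast
  set A : ℂ := ((g : Matrix (Fin 2) (Fin 2) ℝ) 0 0 : ℂ)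
  set B : ℂ := ((g : Matrix (Fin 2) (Fin 2) ℝ) 0 1 : ℂ)
  set C : ℂ := ((g : Matrix (Fin 2) (Fin 2) ℝ) 1 0 : ℂ)
  set E : ℂ := ((g : Matrix (Fin 2) (Fin 2) ℝ) 1 1 : ℂ)
  set A' : ℂ := ((h : Matrix (Fin 2) (Fin 2) ℝ) 0 0 : ℂ)
  set B' : ℂ := ((h : Matrix (Fin 2) (Fin 2) ℝ) 0 1 : ℂ)
  set C' : ℂ := ((h : Matrix (Fin 2) (Fin 2) ℝ) 1 0 : ℂ)
  set D' : ℂ := ((h : Matrix (Fin 2) (Fin 2) ℝ) 1 1 : ℂ)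
  set N : ℂ := A' * z + B' with hN
  set D : ℂ := C' * z + D' with hDdef
  have e1 : A * (N / D) + B = (A * N + B * D) / D := by field_simp
  have e2 : C * (N / D) + E = (C * N + E * D) / D := by field_simp
  rw [e1, e2, div_div_div_cancel_right₀ hD]
  rw [hN, hDdef]
  congr 1 <;> ring

lemma moeb_one (z : ℂ) : moebSL2R 1 z = z := by
  unfold moebSL2R
  simp

lemma moeb_inv (g : Matrix.SpecialLinearGroup (Fin 2) ℝ) {z : ℂ} (hz : z.im ≠ 0) :
    moebSL2R g⁻¹ (moebSL2R g z) = z := by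
  rw [← moeb_mul g⁻¹ g hz, inv_mul_cancel, moeb_one]

lemma ratio_imaginary {ζ : ℂ} {r : ℝ} (hr : 0 < r) (hζ : Complex.normSq ζ = r ^ 2)
    (him : ζ.im ≠ 0) :
    (ζ - r) / (ζ + r) = Complex.I * ((2 * r * ζ.im / Complex.normSq (ζ + r) : ℝ) : ℂ) := by
  have hnd : Complex.normSq ζ = ζ.re ^ 2 + ζ.im ^ 2 := by
    rw [Complex.normSq_apply]; ring
  apply Complex.ext
  · rw [Complex.div_re]
    simp only [Complex.sub_re, Complex.sub_im, Complex.add_re, Complex.add_im,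
      Complex.ofReal_re, Complex.ofReal_im, Complex.mul_re, Complex.I_re, Complex.I_im]
    rw [← add_div]
    have : (ζ.re - r) * (ζ.re + r) + (ζ.im - 0) * (ζ.im + 0) = 0 := by
      rw [hnd] at hζ; linear_combination hζ
    rw [this, zero_div]
    simp
  · rw [Complex.div_im]
    simp only [Complex.sub_re, Complex.sub_im, Complex.add_re, Complex.add_im,
      Complex.ofReal_re, Complex.ofReal_im, Complex.mul_im, Complex.I_re, Complex.I_im]
    rw [div_sub_div_same]
    ring_nf

lemma exists_to_imaginary {z w : ℂ} (hz : 0 < z.im) (hw : w.im < 0) :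
    ∃ h : Matrix.SpecialLinearGroup (Fin 2) ℝ, ∃ a b : ℝ, 0 < a ∧ b < 0 ∧
      moebSL2R h z = Complex.I * (a : ℂ) ∧ moebSL2R h w = Complex.I * (b : ℂ) := by
  rcases eq_or_ne z.re w.re with hre | hre
  · refine ⟨⟨!![1, -z.re; 0, 1], by simp [Matrix.det_fin_two_of]⟩, z.im, w.im, hz, hw, ?_, ?_⟩
    · show ((1 : ℝ) * z + ((-z.re : ℝ) : ℂ)) / ((0 : ℝ) * z + ((1 : ℝ) : ℂ)) = _
      push_cast
      rw [one_mul, zero_mul, zero_add, div_one]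
      apply Complex.ext <;> simp
    · show ((1 : ℝ) * w + ((-z.re : ℝ) : ℂ)) / ((0 : ℝ) * w + ((1 : ℝ) : ℂ)) = _
      push_cast
      rw [one_mul, zero_mul, zero_add, div_one]
      apply Complex.ext <;> simp [hre]
  · have hrediff : z.re - w.re ≠ 0 := sub_ne_zero.mpr hre
    obtain ⟨c, hkey⟩ : ∃ c : ℝ, 2 * c * (z.re - w.re) = Complex.normSq z - Complex.normSq w :=
      ⟨(Complex.normSq z - Complex.normSq w) / (2 * (z.re - w.re)), by field_simp⟩
    obtain ⟨r, hrpos, hr2⟩ : ∃ r : ℝ, 0 < r ∧ r ^ 2 = Complex.normSq (z - (c : ℂ)) := by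
      refine ⟨Real.sqrt (Complex.normSq (z - (c : ℂ))),
        Real.sqrt_pos.mpr (Complex.normSq_pos.mpr ?_), Real.sq_sqrt (Complex.normSq_nonneg _)⟩
      intro h0
      have : z.im = 0 := by
        have := congrArg Complex.im h0; simpa using this
      exact hz.ne' this
    have hη2 : Complex.normSq (w - (c : ℂ)) = r ^ 2 := by
      rw [hr2]
      simp only [Complex.normSq_apply, Complex.sub_re, Complex.sub_im, Complex.ofReal_re,
        Complex.ofReal_im]
      have hnz : Complex.normSq z = z.re * z.re + z.im * z.im := rfl
      have hnw : Complex.normSq w = w.re * w.re + w.im * w.im := rfl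
      rw [hnz, hnw] at hkey
      linear_combination hkey
    obtain ⟨s, hspos, hs2⟩ : ∃ s : ℝ, 0 < s ∧ s ^ 2 * (2 * r) = 1 := by
      refine ⟨(Real.sqrt (2 * r))⁻¹, inv_pos.mpr (Real.sqrt_pos.mpr (by linarith)), ?_⟩
      rw [inv_pow, Real.sq_sqrt (by linarith : (0 : ℝ) ≤ 2 * r)]
      field_simp
    have hdet : Matrix.det !![s, -(s * (c + r)); s, -(s * (c - r))] = 1 := by
      rw [Matrix.det_fin_two_of]; linear_combination hs2
    have hsC : ((s : ℝ) : ℂ) ≠ 0 := by exact_mod_cast hspos.ne'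
    have hmain : ∀ u : ℂ, moebSL2R ⟨_, hdet⟩ u = ((u - (c : ℂ)) - (r : ℂ)) / ((u - (c : ℂ)) + (r : ℂ)) := by
      intro u
      show ((s : ℂ) * u + ((-(s * (c + r)) : ℝ) : ℂ)) / ((s : ℂ) * u + ((-(s * (c - r)) : ℝ) : ℂ)) = _
      push_cast
      rw [show (s : ℂ) * u + -((s : ℂ) * ((c : ℂ) + (r : ℂ))) = (s : ℂ) * ((u - (c : ℂ)) - (r : ℂ)) from by ring,
        show (s : ℂ) * u + -((s : ℂ) * ((c : ℂ) - (r : ℂ))) = (s : ℂ) * ((u - (c : ℂ)) + (r : ℂ)) from by ring,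
        mul_div_mul_left _ _ hsC]
    have hζim : (z - (c : ℂ)).im = z.im := by simp
    have hηim : (w - (c : ℂ)).im = w.im := by simp
    have hdenz : (z - (c : ℂ) + (r : ℂ)) ≠ 0 := by
      intro h0
      have : z.im = 0 := by
        have := congrArg Complex.im h0; simpa using this
      exact hz.ne' this
    have hdenw : (w - (c : ℂ) + (r : ℂ)) ≠ 0 := by
      intro h0
      have : w.im = 0 := by
        have := congrArg Complex.im h0; simpa using this
      exact hw.ne this
    refine ⟨⟨_, hdet⟩, 2 * r * z.im / Complex.normSq (z - (c : ℂ) + (r : ℂ)),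
      2 * r * w.im / Complex.normSq (w - (c : ℂ) + (r : ℂ)), ?_, ?_, ?_, ?_⟩
    · have := Complex.normSq_pos.mpr hdenz
      positivity
    · have hpos := Complex.normSq_pos.mpr hdenw
      apply div_neg_of_neg_of_pos _ hpos
      nlinarith
    · rw [hmain z, ratio_imaginary hrpos hr2.symm (by simp [hz.ne'])]
      rw [hζim]
    · rw [hmain w, ratio_imaginary hrpos hη2 (by simp [hw.ne])]
      rw [hηim]

/-- Unipotent parameterization of the crown domain: `Ξ = G exp(iΛ)·x₀`. -/
theorem crown_unipotent_parameterization :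
    {p : ℂ × ℂ | ∃ g : Matrix.SpecialLinearGroup (Fin 2) ℝ, ∃ x : ℝ,
        x ∈ Set.Ioo (-1 : ℝ) 1 ∧
        p = (moebSL2R g (Complex.I + Complex.I * x),
             moebSL2R g (-Complex.I + Complex.I * x))} =
      {p : ℂ × ℂ | 0 < p.1.im ∧ p.2.im < 0} := by
  ext p
  simp only [Set.mem_setOf_eq, Set.mem_Ioo]
  constructor
  · rintro ⟨g, x, ⟨hx1, hx2⟩, rfl⟩
    refine ⟨?_, ?_⟩
    · apply moeb_im_pos
      have h : (Complex.I + Complex.I * (x : ℂ)).im = 1 + x := by simp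
      rw [h]; linarith
    · apply moeb_im_neg
      have h : (-Complex.I + Complex.I * (x : ℂ)).im = -1 + x := by simp
      rw [h]; linarith
  · rintro ⟨h1, h2⟩
    obtain ⟨h, a, b, ha, hb, hza, hwb⟩ := exists_to_imaginary h1 h2
    have habpos : (0 : ℝ) < a - b := by linarith
    obtain ⟨t, htpos, ht2⟩ : ∃ t : ℝ, 0 < t ∧ t ^ 2 * (a - b) = 2 := by
      refine ⟨Real.sqrt (2 / (a - b)), Real.sqrt_pos.mpr (by positivity), ?_⟩
      rw [Real.sq_sqrt (by positivity)]
      field_simp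
    have htC : ((t : ℝ) : ℂ) ≠ 0 := by exact_mod_cast htpos.ne'
    have hdetD : (!![t, 0; 0, t⁻¹] : Matrix (Fin 2) (Fin 2) ℝ).det = 1 := by
      rw [Matrix.det_fin_two_of]
      field_simp
      norm_num
    set D : Matrix.SpecialLinearGroup (Fin 2) ℝ := ⟨_, hdetD⟩ with hDdef
    have hdm : ∀ u : ℂ, moebSL2R D u = ((t ^ 2 : ℝ) : ℂ) * u := by
      intro u
      show ((t : ℂ) * u + ((0 : ℝ) : ℂ)) / (((0 : ℝ) : ℂ) * u + ((t⁻¹ : ℝ) : ℂ)) = _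
      push_cast
      field_simp
      ring
    have ht2' : ((t : ℂ)) ^ 2 * ((a : ℂ) - (b : ℂ)) = 2 := by exact_mod_cast ht2
    have hHz : moebSL2R (D * h) p.1 = Complex.I + Complex.I * ((t ^ 2 * a - 1 : ℝ) : ℂ) := by
      rw [moeb_mul _ _ h1.ne', hza, hdm]
      push_cast
      ring
    have hHw : moebSL2R (D * h) p.2 = -Complex.I + Complex.I * ((t ^ 2 * a - 1 : ℝ) : ℂ) := by
      rw [moeb_mul _ _ h2.ne, hwb, hdm]
      push_cast
      linear_combination (-Complex.I) * ht2'
    refine ⟨(D * h)⁻¹, t ^ 2 * a - 1, ⟨by nlinarith, by nlinarith⟩, ?_⟩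
    have e1 : moebSL2R (D * h)⁻¹ (Complex.I + Complex.I * ((t ^ 2 * a - 1 : ℝ) : ℂ)) = p.1 := by
      rw [← hHz]
      exact moeb_inv _ h1.ne'
    have e2 : moebSL2R (D * h)⁻¹ (-Complex.I + Complex.I * ((t ^ 2 * a - 1 : ℝ) : ℂ)) = p.2 := by
      rw [← hHw]
      exact moeb_inv _ h2.ne
    rw [Prod.ext_iff]
    exact ⟨e1.symm, e2.symm⟩
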